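/- Fix λ₀ ∈ (0,1) and set ρ = λ₀. The function t ↦ ω(t) = λ₀·(1 - e^{-t}(t+1))/(1-e^{-t}) · (1 + λ₀²/((1-e^{-t})(1-ρ))) is strictly increasing on (0,∞). -/

import Mathlib

open Real Set

lemma my_exp_neg_lt_one {t : ℝ} (ht : 0 < t) : Real.exp (-t) < 1 := by
  rw [Real.exp_lt_one_iff]; linarith

lemma my_D_pos {t : ℝ} (ht : 0 < t) : 0 < 1 - Real.exp (-t) := by
  linarith [my_exp_neg_lt_one ht]

lemma my_psi_pos {t : ℝ} (ht : 0 < t) : 0 < t - 1 + Real.exp (-t) := by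
  have := Real.add_one_lt_exp (x := -t) (by linarith)
  linarith

lemma my_exp_deriv (t : ℝ) : HasDerivAt (fun t : ℝ => Real.exp (-t)) (-Real.exp (-t)) t := by
  simpa [Function.comp_def] using (Real.hasDerivAt_exp (-t)).comp t (hasDerivAt_neg t)

lemma my_deriv_aux (t : ℝ) :
    HasDerivAt (fun t : ℝ => 1 - (t + 1) * Real.exp (-t)) (t * Real.exp (-t)) t := by
  have h := (((hasDerivAt_id t).add_const 1).mul (my_exp_deriv t)).const_sub 1
  simp only [id_eq] at h
  exact h.congr_deriv (by ring)

lemma my_phi_pos {t : ℝ} (ht : 0 < t) : 0 < t + (t + 2) * Real.exp (-t) - 2 := by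
  have hmono : StrictMonoOn (fun t : ℝ => t + (t + 2) * Real.exp (-t) - 2) (Set.Ici 0) := by
    apply strictMonoOn_of_deriv_pos (convex_Ici 0)
    · fun_prop
    · intro s hs
      rw [interior_Ici] at hs
      have hd : HasDerivAt (fun t : ℝ => t + (t + 2) * Real.exp (-t) - 2)
          (1 - (s + 1) * Real.exp (-s)) s := by
        have h := ((hasDerivAt_id s).add
          (((hasDerivAt_id s).add_const 2).mul (my_exp_deriv s))).sub_const 2
        simp only [id_eq] at h
        exact h.congr_deriv (by ring)
      rw [hd.deriv]
      have h2 := Real.add_one_lt_exp (x := s) (ne_of_gt hs)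
      have h3 : (s + 1) * Real.exp (-s) < 1 := by
        rw [Real.exp_neg]
        rw [mul_inv_lt_iff₀ (Real.exp_pos s)]
        linarith
      linarith
  have := hmono (Set.self_mem_Ici) (le_of_lt ht : (0:ℝ) ≤ t) ht
  simpa using this

lemma my_A_mono : StrictMonoOn
    (fun t : ℝ => (1 - Real.exp (-t) * (t + 1)) / (1 - Real.exp (-t))) (Set.Ioi 0) := by
  apply strictMonoOn_of_deriv_pos (convex_Ioi 0)
  · apply ContinuousOn.div
    · fun_prop
    · fun_prop
    · intro t ht
      exact ne_of_gt (my_D_pos ht)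
  · intro t ht
    rw [interior_Ioi] at ht
    have hN : HasDerivAt (fun t : ℝ => 1 - Real.exp (-t) * (t + 1)) (t * Real.exp (-t)) t := by
      have := my_deriv_aux t
      convert this using 2 with s
      ring
    have hD : HasDerivAt (fun t : ℝ => 1 - Real.exp (-t)) (Real.exp (-t)) t := by
      simpa using (my_exp_deriv t).const_sub 1
    have hf := hN.div hD (ne_of_gt (my_D_pos ht))
    rw [show deriv (fun t : ℝ => (1 - Real.exp (-t) * (t + 1)) / (1 - Real.exp (-t))) t = _ from hf.deriv]
    apply div_pos
    · have key : t * Real.exp (-t) * (1 - Real.exp (-t)) -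
          (1 - Real.exp (-t) * (t + 1)) * Real.exp (-t) =
          Real.exp (-t) * (t - 1 + Real.exp (-t)) := by ring
      rw [key]
      exact mul_pos (Real.exp_pos _) (my_psi_pos ht)
    · exact pow_pos (my_D_pos ht) 2

lemma my_B_mono : StrictMonoOn
    (fun t : ℝ => (1 - Real.exp (-t) * (t + 1)) / (1 - Real.exp (-t)) ^ 2) (Set.Ioi 0) := by
  apply strictMonoOn_of_deriv_pos (convex_Ioi 0)
  · apply ContinuousOn.div
    · fun_prop
    · fun_prop
    · intro t ht
      exact ne_of_gt (pow_pos (my_D_pos ht) 2)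
  · intro t ht
    rw [interior_Ioi] at ht
    have hN : HasDerivAt (fun t : ℝ => 1 - Real.exp (-t) * (t + 1)) (t * Real.exp (-t)) t := by
      have := my_deriv_aux t
      convert this using 2 with s
      ring
    have hD : HasDerivAt (fun t : ℝ => 1 - Real.exp (-t)) (Real.exp (-t)) t := by
      simpa using (my_exp_deriv t).const_sub 1
    have hD2 := hD.pow 2
    have hf := hN.div hD2 (ne_of_gt (pow_pos (my_D_pos ht) 2))
    rw [show deriv (fun t : ℝ => (1 - Real.exp (-t) * (t + 1)) / (1 - Real.exp (-t)) ^ 2) t = _ from hf.deriv]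
    apply div_pos
    · have key : t * Real.exp (-t) * (1 - Real.exp (-t)) ^ 2 -
          (1 - Real.exp (-t) * (t + 1)) * ((2:ℕ) * (1 - Real.exp (-t)) ^ 1 * Real.exp (-t)) =
          (1 - Real.exp (-t)) * Real.exp (-t) * (t + (t + 2) * Real.exp (-t) - 2) := by
        push_cast; ring
      refine lt_of_lt_of_eq ?_ key.symm
      exact mul_pos (mul_pos (my_D_pos ht) (Real.exp_pos _)) (my_phi_pos ht)
    · exact pow_pos (pow_pos (my_D_pos ht) 2) 2

theorem stmt_16 (lam : ℝ) (h0 : 0 < lam) (h1 : lam < 1) :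
    StrictMonoOn
      (fun t : ℝ =>
        lam * (1 - Real.exp (-t) * (t + 1)) / (1 - Real.exp (-t)) *
          (1 + lam ^ 2 / ((1 - Real.exp (-t)) * (1 - lam))))
      (Set.Ioi (0:ℝ)) := by
  have hlam : 0 < 1 - lam := by linarith
  have hc : 0 < lam ^ 3 / (1 - lam) := by positivity
  have eqform : ∀ t ∈ Set.Ioi (0:ℝ),
      lam * (1 - Real.exp (-t) * (t + 1)) / (1 - Real.exp (-t)) *
          (1 + lam ^ 2 / ((1 - Real.exp (-t)) * (1 - lam))) =
        lam * ((1 - Real.exp (-t) * (t + 1)) / (1 - Real.exp (-t))) +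
          (lam ^ 3 / (1 - lam)) *
            ((1 - Real.exp (-t) * (t + 1)) / (1 - Real.exp (-t)) ^ 2) := by
    intro t ht
    have hD := my_D_pos ht
    have hD' : (1 - Real.exp (-t)) ≠ 0 := ne_of_gt hD
    have hl' : (1 - lam) ≠ 0 := ne_of_gt hlam
    field_simp
  intro a ha b hb hab
  simp only []
  rw [eqform a ha, eqform b hb]
  have hA := my_A_mono ha hb hab
  have hB := my_B_mono ha hb hab
  have h2 := mul_lt_mul_of_pos_left hA h0
  have h3 := mul_lt_mul_of_pos_left hB hc
  linarith
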